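/- Let β > 1 and C₁, C₂ > 0, and define F(s) = C₁ · s^{−1/(2β−2)} · exp(−C₂ · s^{−1/(β−1)}) for s > 0 and F(s) = 0 for s ≤ 0. Then F belongs to the class Γ₀ with auxiliary function ρ₁(s) = M₁ · s^{1+1/(β−1)} for a suitable positive constant M₁ (namely M₁ = (β−1)/C₂): for every x ∈ ℝ, F(s + x·ρ₁(s))/F(s) → exp(x) as s → 0⁺. -/

import Mathlib

open Filter Set Real Topology

/-- The small ball probability for polynomial eigenvalues belongs to the class `Γ₀` :
for `β > 1`, `C₁, C₂ > 0`, `F s = C₁ * s ^ (-1/(2β-2)) * exp (-C₂ * s ^ (-1/(β-1)))`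
for `s > 0` (and `F s = 0` for `s ≤ 0`) satisfies, with auxiliary function
`ρ₁ s = M₁ * s ^ (1 + 1/(β-1))` where `M₁ = (β-1)/C₂`,
`F (s + x * ρ₁ s) / F s → exp x` as `s → 0⁺` for every `x ∈ ℝ`. -/
theorem polynomial_smallBall_memGamma0 (β C₁ C₂ : ℝ) (hβ : 1 < β) (hC₁ : 0 < C₁)
    (hC₂ : 0 < C₂) (F : ℝ → ℝ)
    (hFpos : ∀ s : ℝ, 0 < s →
      F s = C₁ * s ^ (-(1 / (2 * β - 2))) * Real.exp (-C₂ * s ^ (-(1 / (β - 1)))))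
    (hFzero : ∀ s : ℝ, s ≤ 0 → F s = 0) :
    ∀ x : ℝ,
      Tendsto (fun s => F (s + x * (((β - 1) / C₂) * s ^ (1 + 1 / (β - 1)))) / F s)
        (nhdsWithin 0 (Set.Ioi 0)) (nhds (Real.exp x)) := by
  intro x
  have hβ1 : (0:ℝ) < β - 1 := by linarith
  set γ : ℝ := 1 / (β - 1) with hγdef
  have hγ : 0 < γ := by positivity
  set a : ℝ := x * ((β - 1) / C₂) with hadef
  set f : ℝ → ℝ := fun v => (1 + a * v) ^ (-γ) with hfdef
  -- derivative of f at 0 is -γ * a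
  have hderiv : HasDerivAt f (-γ * a) 0 := by
    have h1 : HasDerivAt (fun v : ℝ => 1 + a * v) a 0 := by
      simpa using ((hasDerivAt_id (0:ℝ)).const_mul a).const_add 1
    have h2 : HasDerivAt (fun y : ℝ => y ^ (-γ)) (-γ * (1:ℝ) ^ (-γ - 1)) (1 + a * 0) := by
      simpa using Real.hasDerivAt_rpow_const (p := -γ) (x := (1:ℝ)) (Or.inl one_ne_zero)
    have h3 := h2.comp 0 h1
    simpa [Function.comp_def, hfdef] using h3
  have hslope : Tendsto (slope f 0) (𝓝[≠] 0) (𝓝 (-γ * a)) :=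
    hasDerivAt_iff_tendsto_slope.mp hderiv
  -- s ^ γ tends to 0 within punctured nbhd
  have hpow0 : Tendsto (fun s : ℝ => s ^ γ) (𝓝[>] (0:ℝ)) (𝓝 0) := by
    have hc : ContinuousAt (fun s : ℝ => s ^ γ) 0 :=
      Real.continuousAt_rpow_const 0 γ (Or.inr hγ.le)
    have := hc.tendsto.mono_left (nhdsWithin_le_nhds (s := Set.Ioi (0:ℝ)))
    simpa [Real.zero_rpow hγ.ne'] using this
  have hpow : Tendsto (fun s : ℝ => s ^ γ) (𝓝[>] (0:ℝ)) (𝓝[≠] 0) := by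
    apply tendsto_nhdsWithin_of_tendsto_nhds_of_eventually_within _ hpow0
    filter_upwards [self_mem_nhdsWithin] with s hs
    exact (Real.rpow_pos_of_pos hs γ).ne'
  have hx : -C₂ * (-γ * a) = x := by
    rw [hadef, hγdef]; field_simp
  have hmain : Tendsto (fun s : ℝ => -C₂ * slope f 0 (s ^ γ)) (𝓝[>] (0:ℝ)) (𝓝 x) := by
    have := (hslope.comp hpow).const_mul (-C₂)
    rw [← hx]
    exact this
  have hasγ : Tendsto (fun s : ℝ => a * s ^ γ) (𝓝[>] (0:ℝ)) (𝓝 0) := by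
    simpa using hpow0.const_mul a
  have hg1 : Tendsto (fun s : ℝ => 1 + a * s ^ γ) (𝓝[>] (0:ℝ)) (𝓝 1) := by
    simpa using hasγ.const_add 1
  have hfac1 : Tendsto (fun s : ℝ => (1 + a * s ^ γ) ^ (-(1/(2*β-2)))) (𝓝[>] (0:ℝ)) (𝓝 1) := by
    have hc : ContinuousAt (fun y : ℝ => y ^ (-(1/(2*β-2)))) 1 :=
      Real.continuousAt_rpow_const 1 _ (Or.inl one_ne_zero)
    have := hc.tendsto.comp hg1
    simpa [Real.one_rpow, Function.comp_def] using this
  have hlim : Tendsto (fun s : ℝ => (1 + a * s ^ γ) ^ (-(1/(2*β-2)))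
      * Real.exp (-C₂ * slope f 0 (s ^ γ))) (𝓝[>] (0:ℝ)) (𝓝 (Real.exp x)) := by
    have he : Tendsto (fun s : ℝ => Real.exp (-C₂ * slope f 0 (s ^ γ))) (𝓝[>] (0:ℝ))
        (𝓝 (Real.exp x)) := (Real.continuous_exp.tendsto x).comp hmain
    simpa using hfac1.mul he
  apply hlim.congr'
  -- eventual equality
  have hsmall : ∀ᶠ s in 𝓝[>] (0:ℝ), |a * s ^ γ| < 1/2 := by
    filter_upwards [Metric.tendsto_nhds.mp hasγ (1/2) (by norm_num)] with s h
    simpa [Real.dist_eq, abs_mul] using h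
  filter_upwards [hsmall, self_mem_nhdsWithin] with s hs1 hs2
  have hs : 0 < s := hs2
  have hg : 0 < 1 + a * s ^ γ := by
    have := abs_lt.mp hs1
    linarith [this.1]
  have hsγ : 0 < s ^ γ := Real.rpow_pos_of_pos hs γ
  have harg : s + x * ((β - 1) / C₂ * s ^ (1 + γ)) = s * (1 + a * s ^ γ) := by
    rw [Real.rpow_add hs, Real.rpow_one, hadef]; ring
  have hFs : F s = C₁ * s ^ (-(1 / (2 * β - 2))) * Real.exp (-C₂ * s ^ (-(1 / (β - 1)))) :=
    hFpos s hs
  have hFt : F (s * (1 + a * s ^ γ))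
      = C₁ * (s * (1 + a * s ^ γ)) ^ (-(1 / (2 * β - 2)))
        * Real.exp (-C₂ * (s * (1 + a * s ^ γ)) ^ (-(1 / (β - 1)))) :=
    hFpos _ (mul_pos hs hg)
  have hslopeval : slope f 0 (s ^ γ) = ((1 + a * s ^ γ) ^ (-γ) - 1) / s ^ γ := by
    rw [slope_def_field, hfdef]
    simp [Real.one_rpow]
  have hexpne : -(1 / (β - 1)) = -γ := by rw [hγdef]
  have hmulr : (s * (1 + a * s ^ γ)) ^ (-(1 / (2 * β - 2)))
      = s ^ (-(1 / (2 * β - 2))) * (1 + a * s ^ γ) ^ (-(1 / (2 * β - 2))) :=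
    Real.mul_rpow hs.le hg.le
  have hmulr' : (s * (1 + a * s ^ γ)) ^ (-(1 / (β - 1)))
      = s ^ (-(1 / (β - 1))) * (1 + a * s ^ γ) ^ (-(1 / (β - 1))) :=
    Real.mul_rpow hs.le hg.le
  have hsneg : s ^ (-(1 / (β - 1))) = (s ^ γ)⁻¹ := by
    rw [hexpne, Real.rpow_neg hs.le]
  have hexp : Real.exp (-C₂ * (s ^ (-(1 / (β - 1))) * (1 + a * s ^ γ) ^ (-(1 / (β - 1)))))
      / Real.exp (-C₂ * s ^ (-(1 / (β - 1))))
      = Real.exp (-C₂ * (((1 + a * s ^ γ) ^ (-γ) - 1) / s ^ γ)) := by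
    rw [← Real.exp_sub]
    congr 1
    rw [hsneg, hexpne]
    field_simp
    ring
  -- now compute
  rw [harg, hFt, hFs, hslopeval, ← hexp, hmulr, hmulr']
  have hE2 : Real.exp (-C₂ * s ^ (-(1 / (β - 1)))) ≠ 0 := Real.exp_ne_zero _
  have hse : s ^ (-(1 / (2 * β - 2))) ≠ 0 := (Real.rpow_pos_of_pos hs _).ne'
  field_simp
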